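/- In the lattice Equ(6) of all equivalence relations on the set {1,2,…,6}, define α to be the equivalence whose only nonsingleton block is {4,5,6}, ε the equivalence whose only nonsingleton block is {1,2,3}, β = α ⊔ ε, γ = (the equivalence with only nonsingleton block {1,2,4}) ⊔ equ(3,5), and δ = (the equivalence with only nonsingleton block {1,3,6}) ⊔ equ(2,5). Then α < β and the four-element set {α,β,γ,δ} generates the lattice Equ(6). -/
import Mathlib


/-- The least equivalence relation on `A` identifying `u` and `v`
(its only nonsingleton block is `{u, v}`; it is `⊥` when `u = v`). -/
def equ {A : Type*} (u v : A) : Setoid A := sInf {s : Setoid A | s u v}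

namespace Equ6

lemma equ_rel_self {A : Type*} (u v : A) : (equ u v) u v := fun _ hs => hs

lemma equ_le {A : Type*} {u v : A} {s : Setoid A} (h : s u v) : equ u v ≤ s :=
  sInf_le h

lemma equ_eq_ker (u v : Fin 6) (f : Fin 6 → Fin 6) (h1 : f u = f v)
    (h2 : ∀ a b, f a = f b → a = b ∨ (a = u ∧ b = v) ∨ (a = v ∧ b = u)) :
    equ u v = Setoid.ker f := by
  refine le_antisymm (equ_le h1) (Setoid.le_def.2 fun {a b} hab => ?_)
  rcases h2 a b hab with rfl | ⟨rfl, rfl⟩ | ⟨rfl, rfl⟩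
  · exact (equ _ _).refl a
  · exact equ_rel_self _ _
  · exact (equ _ _).symm (equ_rel_self _ _)

def chainB (r : Fin 6 → Fin 6 → Bool) : ℕ → Fin 6 → Fin 6 → Bool
  | 0, a, b => a == b
  | n+1, a, b => chainB r n a b || (List.finRange 6).any (fun c => chainB r n a c && r c b)

lemma rel_of_chainB {r : Fin 6 → Fin 6 → Bool} {s : Setoid (Fin 6)}
    (h0 : ∀ a b, r a b = true → s a b) :
    ∀ n a b, chainB r n a b = true → s a b := by
  intro n
  induction n with
  | zero => intro a b h; exact (by simpa [chainB] using h : a = b) ▸ s.refl a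
  | succ n ih =>
    intro a b h
    simp only [chainB, Bool.or_eq_true, List.any_eq_true, Bool.and_eq_true] at h
    rcases h with h | ⟨c, _, hc1, hc2⟩
    · exact ih a b h
    · exact s.trans (ih a c hc1) (h0 c b hc2)

lemma ker_sup_ker (f g h : Fin 6 → Fin 6) (n : ℕ)
    (h1 : ∀ a b, f a = f b → h a = h b)
    (h2 : ∀ a b, g a = g b → h a = h b)
    (h3 : ∀ a b, h a = h b → chainB (fun x y => f x == f y || g x == g y) n a b = true) :
    Setoid.ker f ⊔ Setoid.ker g = Setoid.ker h := by
  refine le_antisymm (sup_le (Setoid.le_def.2 fun {a b} hab => h1 a b hab)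
    (Setoid.le_def.2 fun {a b} hab => h2 a b hab)) (Setoid.le_def.2 fun {a b} hab => ?_)
  refine rel_of_chainB ?_ n a b (h3 a b hab)
  intro x y hxy
  rcases (by simpa using hxy : f x = f y ∨ g x = g y) with h' | h'
  · exact Setoid.le_def.1 (le_sup_left : Setoid.ker f ≤ _) h'
  · exact Setoid.le_def.1 (le_sup_right : Setoid.ker g ≤ _) h'

lemma ker_inf_ker (f g h : Fin 6 → Fin 6)
    (H : ∀ a b : Fin 6, (f a = f b ∧ g a = g b) ↔ h a = h b) :
    Setoid.ker f ⊓ Setoid.ker g = Setoid.ker h := by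
  ext a b
  rw [Setoid.inf_iff_and, Setoid.ker_def, Setoid.ker_def, Setoid.ker_def]
  exact H a b

lemma mem_of_all_equ {S : Set (Setoid (Fin 6))} (hS : SupClosed S)
    (h : ∀ u v : Fin 6, equ u v ∈ S) (t : Setoid (Fin 6)) : t ∈ S := by
  classical
  have hne : (Finset.univ.filter (fun p : Fin 6 × Fin 6 => t p.1 p.2)).Nonempty :=
    ⟨(0, 0), Finset.mem_filter.2 ⟨Finset.mem_univ _, t.refl 0⟩⟩
  have key : t = (Finset.univ.filter (fun p : Fin 6 × Fin 6 => t p.1 p.2)).sup'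
      hne (fun p => equ p.1 p.2) := by
    refine le_antisymm (Setoid.le_def.2 fun {a b} hab => ?_) (Finset.sup'_le _ _ fun p hp => ?_)
    · have hmem : (a, b) ∈ Finset.univ.filter (fun p : Fin 6 × Fin 6 => t p.1 p.2) := by
        simp [hab]
      exact Setoid.le_def.1 (Finset.le_sup' (fun p : Fin 6 × Fin 6 => equ p.1 p.2) hmem)
        (equ_rel_self a b)
    · exact equ_le (by simpa using hp)
  rw [key]
  exact hS.finsetSup'_mem hne fun p _ => h p.1 p.2

lemma lk010234 : Setoid.ker (![0,0,0,1,1,1] : Fin 6 → Fin 6) ⊓ Setoid.ker (![0,1,0,2,1,0] : Fin 6 → Fin 6) = Setoid.ker (![0,1,0,2,3,4] : Fin 6 → Fin 6) :=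
  ker_inf_ker _ _ _ (by decide)
lemma lk000001 : Setoid.ker (![0,1,0,2,3,4] : Fin 6 → Fin 6) ⊔ Setoid.ker (![0,0,1,0,1,2] : Fin 6 → Fin 6) = Setoid.ker (![0,0,0,0,0,1] : Fin 6 → Fin 6) :=
  ker_sup_ker _ _ _ 3 (by decide) (by decide) (by decide)
lemma lk001234 : Setoid.ker (![0,0,1,0,1,2] : Fin 6 → Fin 6) ⊓ Setoid.ker (![0,0,0,1,1,1] : Fin 6 → Fin 6) = Setoid.ker (![0,0,1,2,3,4] : Fin 6 → Fin 6) :=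
  ker_inf_ker _ _ _ (by decide)
lemma lk000100 : Setoid.ker (![0,1,0,2,1,0] : Fin 6 → Fin 6) ⊔ Setoid.ker (![0,0,1,2,3,4] : Fin 6 → Fin 6) = Setoid.ker (![0,0,0,1,0,0] : Fin 6 → Fin 6) :=
  ker_sup_ker _ _ _ 3 (by decide) (by decide) (by decide)
lemma lk012344 : Setoid.ker (![0,0,0,1,0,0] : Fin 6 → Fin 6) ⊓ Setoid.ker (![0,1,2,3,3,3] : Fin 6 → Fin 6) = Setoid.ker (![0,1,2,3,4,4] : Fin 6 → Fin 6) :=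
  ker_inf_ker _ _ _ (by decide)
lemma lk001011 : Setoid.ker (![0,1,2,3,4,4] : Fin 6 → Fin 6) ⊔ Setoid.ker (![0,0,1,0,1,2] : Fin 6 → Fin 6) = Setoid.ker (![0,0,1,0,1,1] : Fin 6 → Fin 6) :=
  ker_sup_ker _ _ _ 2 (by decide) (by decide) (by decide)
lemma lk010222 : Setoid.ker (![0,1,0,2,3,4] : Fin 6 → Fin 6) ⊔ Setoid.ker (![0,1,2,3,3,3] : Fin 6 → Fin 6) = Setoid.ker (![0,1,0,2,2,2] : Fin 6 → Fin 6) :=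
  ker_sup_ker _ _ _ 1 (by decide) (by decide) (by decide)
lemma lk010223 : Setoid.ker (![0,0,0,0,0,1] : Fin 6 → Fin 6) ⊓ Setoid.ker (![0,1,0,2,2,2] : Fin 6 → Fin 6) = Setoid.ker (![0,1,0,2,2,3] : Fin 6 → Fin 6) :=
  ker_inf_ker _ _ _ (by decide)
lemma lk010110 : Setoid.ker (![0,1,0,2,2,3] : Fin 6 → Fin 6) ⊔ Setoid.ker (![0,1,0,2,1,0] : Fin 6 → Fin 6) = Setoid.ker (![0,1,0,1,1,0] : Fin 6 → Fin 6) :=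
  ker_sup_ker _ _ _ 2 (by decide) (by decide) (by decide)
lemma lk012132 : Setoid.ker (![0,0,1,0,1,1] : Fin 6 → Fin 6) ⊓ Setoid.ker (![0,1,0,1,1,0] : Fin 6 → Fin 6) = Setoid.ker (![0,1,2,1,3,2] : Fin 6 → Fin 6) :=
  ker_inf_ker _ _ _ (by decide)
lemma lk000123 : Setoid.ker (![0,1,0,2,3,4] : Fin 6 → Fin 6) ⊔ Setoid.ker (![0,0,1,2,3,4] : Fin 6 → Fin 6) = Setoid.ker (![0,0,0,1,2,3] : Fin 6 → Fin 6) :=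
  ker_sup_ker _ _ _ 2 (by decide) (by decide) (by decide)
lemma lk000010 : Setoid.ker (![0,1,2,1,3,2] : Fin 6 → Fin 6) ⊔ Setoid.ker (![0,0,0,1,2,3] : Fin 6 → Fin 6) = Setoid.ker (![0,0,0,0,1,0] : Fin 6 → Fin 6) :=
  ker_sup_ker _ _ _ 3 (by decide) (by decide) (by decide)
lemma lk010213 : Setoid.ker (![0,1,0,2,1,0] : Fin 6 → Fin 6) ⊓ Setoid.ker (![0,0,0,0,0,1] : Fin 6 → Fin 6) = Setoid.ker (![0,1,0,2,1,3] : Fin 6 → Fin 6) :=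
  ker_inf_ker _ _ _ (by decide)
lemma lk010112 : Setoid.ker (![0,1,0,2,2,3] : Fin 6 → Fin 6) ⊔ Setoid.ker (![0,1,0,2,1,3] : Fin 6 → Fin 6) = Setoid.ker (![0,1,0,1,1,2] : Fin 6 → Fin 6) :=
  ker_sup_ker _ _ _ 2 (by decide) (by decide) (by decide)
lemma lk012134 : Setoid.ker (![0,1,0,1,1,2] : Fin 6 → Fin 6) ⊓ Setoid.ker (![0,0,1,0,1,2] : Fin 6 → Fin 6) = Setoid.ker (![0,1,2,1,3,4] : Fin 6 → Fin 6) :=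
  ker_inf_ker _ _ _ (by decide)
lemma lk000012 : Setoid.ker (![0,0,0,1,2,3] : Fin 6 → Fin 6) ⊔ Setoid.ker (![0,1,2,1,3,4] : Fin 6 → Fin 6) = Setoid.ker (![0,0,0,0,1,2] : Fin 6 → Fin 6) :=
  ker_sup_ker _ _ _ 2 (by decide) (by decide) (by decide)
lemma lk000102 : Setoid.ker (![0,0,0,1,0,0] : Fin 6 → Fin 6) ⊓ Setoid.ker (![0,0,0,0,0,1] : Fin 6 → Fin 6) = Setoid.ker (![0,0,0,1,0,2] : Fin 6 → Fin 6) :=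
  ker_inf_ker _ _ _ (by decide)
lemma lk001213 : Setoid.ker (![0,0,0,1,0,0] : Fin 6 → Fin 6) ⊓ Setoid.ker (![0,0,1,0,1,2] : Fin 6 → Fin 6) = Setoid.ker (![0,0,1,2,1,3] : Fin 6 → Fin 6) :=
  ker_inf_ker _ _ _ (by decide)
lemma lk001211 : Setoid.ker (![0,1,2,3,4,4] : Fin 6 → Fin 6) ⊔ Setoid.ker (![0,0,1,2,1,3] : Fin 6 → Fin 6) = Setoid.ker (![0,0,1,2,1,1] : Fin 6 → Fin 6) :=
  ker_sup_ker _ _ _ 2 (by decide) (by decide) (by decide)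
lemma lk012342 : Setoid.ker (![0,0,1,2,1,1] : Fin 6 → Fin 6) ⊓ Setoid.ker (![0,1,0,1,1,0] : Fin 6 → Fin 6) = Setoid.ker (![0,1,2,3,4,2] : Fin 6 → Fin 6) :=
  ker_inf_ker _ _ _ (by decide)
lemma lk000120 : Setoid.ker (![0,1,2,3,4,2] : Fin 6 → Fin 6) ⊔ Setoid.ker (![0,0,0,1,2,3] : Fin 6 → Fin 6) = Setoid.ker (![0,0,0,1,2,0] : Fin 6 → Fin 6) :=
  ker_sup_ker _ _ _ 2 (by decide) (by decide) (by decide)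
lemma lk010111 : Setoid.ker (![0,1,0,2,2,2] : Fin 6 → Fin 6) ⊔ Setoid.ker (![0,1,0,2,1,3] : Fin 6 → Fin 6) = Setoid.ker (![0,1,0,1,1,1] : Fin 6 → Fin 6) :=
  ker_sup_ker _ _ _ 2 (by decide) (by decide) (by decide)
lemma lk012133 : Setoid.ker (![0,1,0,1,1,1] : Fin 6 → Fin 6) ⊓ Setoid.ker (![0,0,1,0,1,1] : Fin 6 → Fin 6) = Setoid.ker (![0,1,2,1,3,3] : Fin 6 → Fin 6) :=
  ker_inf_ker _ _ _ (by decide)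
lemma lk001222 : Setoid.ker (![0,0,1,2,3,4] : Fin 6 → Fin 6) ⊔ Setoid.ker (![0,1,2,3,3,3] : Fin 6 → Fin 6) = Setoid.ker (![0,0,1,2,2,2] : Fin 6 → Fin 6) :=
  ker_sup_ker _ _ _ 1 (by decide) (by decide) (by decide)
lemma lk001223 : Setoid.ker (![0,0,1,2,2,2] : Fin 6 → Fin 6) ⊓ Setoid.ker (![0,0,0,0,0,1] : Fin 6 → Fin 6) = Setoid.ker (![0,0,1,2,2,3] : Fin 6 → Fin 6) :=
  ker_inf_ker _ _ _ (by decide)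
lemma lk001000 : Setoid.ker (![0,1,2,1,3,3] : Fin 6 → Fin 6) ⊔ Setoid.ker (![0,0,1,2,2,3] : Fin 6 → Fin 6) = Setoid.ker (![0,0,1,0,0,0] : Fin 6 → Fin 6) :=
  ker_sup_ker _ _ _ 4 (by decide) (by decide) (by decide)
lemma lk001002 : Setoid.ker (![0,0,1,2,2,3] : Fin 6 → Fin 6) ⊔ Setoid.ker (![0,1,2,1,3,4] : Fin 6 → Fin 6) = Setoid.ker (![0,0,1,0,0,2] : Fin 6 → Fin 6) :=
  ker_sup_ker _ _ _ 3 (by decide) (by decide) (by decide)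
lemma lk001023 : Setoid.ker (![0,0,1,2,3,4] : Fin 6 → Fin 6) ⊔ Setoid.ker (![0,1,2,1,3,4] : Fin 6 → Fin 6) = Setoid.ker (![0,0,1,0,2,3] : Fin 6 → Fin 6) :=
  ker_sup_ker _ _ _ 2 (by decide) (by decide) (by decide)
lemma lk001111 : Setoid.ker (![0,0,1,2,2,2] : Fin 6 → Fin 6) ⊔ Setoid.ker (![0,0,1,2,1,3] : Fin 6 → Fin 6) = Setoid.ker (![0,0,1,1,1,1] : Fin 6 → Fin 6) :=
  ker_sup_ker _ _ _ 2 (by decide) (by decide) (by decide)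
lemma lk001112 : Setoid.ker (![0,0,1,2,2,3] : Fin 6 → Fin 6) ⊔ Setoid.ker (![0,0,1,2,1,3] : Fin 6 → Fin 6) = Setoid.ker (![0,0,1,1,1,2] : Fin 6 → Fin 6) :=
  ker_sup_ker _ _ _ 2 (by decide) (by decide) (by decide)
lemma lk012332 : Setoid.ker (![0,0,1,1,1,1] : Fin 6 → Fin 6) ⊓ Setoid.ker (![0,1,0,1,1,0] : Fin 6 → Fin 6) = Setoid.ker (![0,1,2,3,3,2] : Fin 6 → Fin 6) :=
  ker_inf_ker _ _ _ (by decide)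
lemma lk010000 : Setoid.ker (![0,1,2,3,3,2] : Fin 6 → Fin 6) ⊔ Setoid.ker (![0,1,0,2,2,2] : Fin 6 → Fin 6) = Setoid.ker (![0,1,0,0,0,0] : Fin 6 → Fin 6) :=
  ker_sup_ker _ _ _ 3 (by decide) (by decide) (by decide)
lemma lk010233 : Setoid.ker (![0,0,0,1,0,0] : Fin 6 → Fin 6) ⊓ Setoid.ker (![0,1,0,2,2,2] : Fin 6 → Fin 6) = Setoid.ker (![0,1,0,2,3,3] : Fin 6 → Fin 6) :=
  ker_inf_ker _ _ _ (by decide)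
lemma lk010200 : Setoid.ker (![0,1,2,3,4,2] : Fin 6 → Fin 6) ⊔ Setoid.ker (![0,1,0,2,3,3] : Fin 6 → Fin 6) = Setoid.ker (![0,1,0,2,0,0] : Fin 6 → Fin 6) :=
  ker_sup_ker _ _ _ 3 (by decide) (by decide) (by decide)
lemma lk010230 : Setoid.ker (![0,1,2,3,4,2] : Fin 6 → Fin 6) ⊔ Setoid.ker (![0,1,0,2,3,4] : Fin 6 → Fin 6) = Setoid.ker (![0,1,0,2,3,0] : Fin 6 → Fin 6) :=
  ker_sup_ker _ _ _ 2 (by decide) (by decide) (by decide)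
lemma lk011111 : Setoid.ker (![0,1,2,1,3,3] : Fin 6 → Fin 6) ⊔ Setoid.ker (![0,1,2,3,3,2] : Fin 6 → Fin 6) = Setoid.ker (![0,1,1,1,1,1] : Fin 6 → Fin 6) :=
  ker_sup_ker _ _ _ 4 (by decide) (by decide) (by decide)
lemma lk011234 : Setoid.ker (![0,1,1,1,1,1] : Fin 6 → Fin 6) ⊓ Setoid.ker (![0,0,0,1,2,3] : Fin 6 → Fin 6) = Setoid.ker (![0,1,1,2,3,4] : Fin 6 → Fin 6) :=
  ker_inf_ker _ _ _ (by decide)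
lemma lk012034 : Setoid.ker (![0,1,0,0,0,0] : Fin 6 → Fin 6) ⊓ Setoid.ker (![0,0,1,0,2,3] : Fin 6 → Fin 6) = Setoid.ker (![0,1,2,0,3,4] : Fin 6 → Fin 6) :=
  ker_inf_ker _ _ _ (by decide)
lemma lk012334 : Setoid.ker (![0,1,2,3,3,3] : Fin 6 → Fin 6) ⊓ Setoid.ker (![0,0,0,0,0,1] : Fin 6 → Fin 6) = Setoid.ker (![0,1,2,3,3,4] : Fin 6 → Fin 6) :=
  ker_inf_ker _ _ _ (by decide)
lemma lk012111 : Setoid.ker (![0,1,2,1,3,3] : Fin 6 → Fin 6) ⊔ Setoid.ker (![0,1,2,3,3,4] : Fin 6 → Fin 6) = Setoid.ker (![0,1,2,1,1,1] : Fin 6 → Fin 6) :=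
  ker_sup_ker _ _ _ 3 (by decide) (by decide) (by decide)
lemma lk012122 : Setoid.ker (![0,1,2,1,3,3] : Fin 6 → Fin 6) ⊔ Setoid.ker (![0,1,2,3,4,2] : Fin 6 → Fin 6) = Setoid.ker (![0,1,2,1,2,2] : Fin 6 → Fin 6) :=
  ker_sup_ker _ _ _ 2 (by decide) (by decide) (by decide)
lemma lk012222 : Setoid.ker (![0,1,2,3,4,4] : Fin 6 → Fin 6) ⊔ Setoid.ker (![0,1,2,3,3,2] : Fin 6 → Fin 6) = Setoid.ker (![0,1,2,2,2,2] : Fin 6 → Fin 6) :=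
  ker_sup_ker _ _ _ 3 (by decide) (by decide) (by decide)
lemma lk012234 : Setoid.ker (![0,0,0,0,1,2] : Fin 6 → Fin 6) ⊓ Setoid.ker (![0,1,2,2,2,2] : Fin 6 → Fin 6) = Setoid.ker (![0,1,2,2,3,4] : Fin 6 → Fin 6) :=
  ker_inf_ker _ _ _ (by decide)
lemma lk012304 : Setoid.ker (![0,1,0,2,0,0] : Fin 6 → Fin 6) ⊓ Setoid.ker (![0,0,1,0,0,2] : Fin 6 → Fin 6) = Setoid.ker (![0,1,2,3,0,4] : Fin 6 → Fin 6) :=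
  ker_inf_ker _ _ _ (by decide)
lemma lk012314 : Setoid.ker (![0,1,2,1,1,1] : Fin 6 → Fin 6) ⊓ Setoid.ker (![0,0,0,1,0,2] : Fin 6 → Fin 6) = Setoid.ker (![0,1,2,3,1,4] : Fin 6 → Fin 6) :=
  ker_inf_ker _ _ _ (by decide)
lemma lk012324 : Setoid.ker (![0,1,2,1,2,2] : Fin 6 → Fin 6) ⊓ Setoid.ker (![0,0,1,1,1,2] : Fin 6 → Fin 6) = Setoid.ker (![0,1,2,3,2,4] : Fin 6 → Fin 6) :=
  ker_inf_ker _ _ _ (by decide)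
lemma lk012340 : Setoid.ker (![0,0,1,0,0,0] : Fin 6 → Fin 6) ⊓ Setoid.ker (![0,1,0,2,3,0] : Fin 6 → Fin 6) = Setoid.ker (![0,1,2,3,4,0] : Fin 6 → Fin 6) :=
  ker_inf_ker _ _ _ (by decide)
lemma lk012341 : Setoid.ker (![0,1,2,1,1,1] : Fin 6 → Fin 6) ⊓ Setoid.ker (![0,0,0,1,2,0] : Fin 6 → Fin 6) = Setoid.ker (![0,1,2,3,4,1] : Fin 6 → Fin 6) :=
  ker_inf_ker _ _ _ (by decide)
lemma lk012343 : Setoid.ker (![0,0,0,0,1,0] : Fin 6 → Fin 6) ⊓ Setoid.ker (![0,1,2,3,3,3] : Fin 6 → Fin 6) = Setoid.ker (![0,1,2,3,4,3] : Fin 6 → Fin 6) :=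
  ker_inf_ker _ _ _ (by decide)
lemma lk012345 : Setoid.ker (![0,0,1,2,3,4] : Fin 6 → Fin 6) ⊓ Setoid.ker (![0,1,2,2,3,4] : Fin 6 → Fin 6) = Setoid.ker (![0,1,2,3,4,5] : Fin 6 → Fin 6) :=
  ker_inf_ker _ _ _ (by decide)
lemma le01 : equ (0:Fin 6) 1 = Setoid.ker (![0,0,1,2,3,4] : Fin 6 → Fin 6) :=
  equ_eq_ker _ _ _ (by decide) (by decide)
lemma le02 : equ (0:Fin 6) 2 = Setoid.ker (![0,1,0,2,3,4] : Fin 6 → Fin 6) :=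
  equ_eq_ker _ _ _ (by decide) (by decide)
lemma le03 : equ (0:Fin 6) 3 = Setoid.ker (![0,1,2,0,3,4] : Fin 6 → Fin 6) :=
  equ_eq_ker _ _ _ (by decide) (by decide)
lemma le04 : equ (0:Fin 6) 4 = Setoid.ker (![0,1,2,3,0,4] : Fin 6 → Fin 6) :=
  equ_eq_ker _ _ _ (by decide) (by decide)
lemma le05 : equ (0:Fin 6) 5 = Setoid.ker (![0,1,2,3,4,0] : Fin 6 → Fin 6) :=
  equ_eq_ker _ _ _ (by decide) (by decide)
lemma le12 : equ (1:Fin 6) 2 = Setoid.ker (![0,1,1,2,3,4] : Fin 6 → Fin 6) :=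
  equ_eq_ker _ _ _ (by decide) (by decide)
lemma le13 : equ (1:Fin 6) 3 = Setoid.ker (![0,1,2,1,3,4] : Fin 6 → Fin 6) :=
  equ_eq_ker _ _ _ (by decide) (by decide)
lemma le14 : equ (1:Fin 6) 4 = Setoid.ker (![0,1,2,3,1,4] : Fin 6 → Fin 6) :=
  equ_eq_ker _ _ _ (by decide) (by decide)
lemma le15 : equ (1:Fin 6) 5 = Setoid.ker (![0,1,2,3,4,1] : Fin 6 → Fin 6) :=
  equ_eq_ker _ _ _ (by decide) (by decide)
lemma le23 : equ (2:Fin 6) 3 = Setoid.ker (![0,1,2,2,3,4] : Fin 6 → Fin 6) :=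
  equ_eq_ker _ _ _ (by decide) (by decide)
lemma le24 : equ (2:Fin 6) 4 = Setoid.ker (![0,1,2,3,2,4] : Fin 6 → Fin 6) :=
  equ_eq_ker _ _ _ (by decide) (by decide)
lemma le25 : equ (2:Fin 6) 5 = Setoid.ker (![0,1,2,3,4,2] : Fin 6 → Fin 6) :=
  equ_eq_ker _ _ _ (by decide) (by decide)
lemma le34 : equ (3:Fin 6) 4 = Setoid.ker (![0,1,2,3,3,4] : Fin 6 → Fin 6) :=
  equ_eq_ker _ _ _ (by decide) (by decide)
lemma le35 : equ (3:Fin 6) 5 = Setoid.ker (![0,1,2,3,4,3] : Fin 6 → Fin 6) :=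
  equ_eq_ker _ _ _ (by decide) (by decide)
lemma le45 : equ (4:Fin 6) 5 = Setoid.ker (![0,1,2,3,4,4] : Fin 6 → Fin 6) :=
  equ_eq_ker _ _ _ (by decide) (by decide)
lemma gk012334_k012344 : Setoid.ker (![0,1,2,3,3,4] : Fin 6 → Fin 6) ⊔ Setoid.ker (![0,1,2,3,4,4] : Fin 6 → Fin 6) = Setoid.ker (![0,1,2,3,3,3] : Fin 6 → Fin 6) :=
  ker_sup_ker _ _ _ 2 (by decide) (by decide) (by decide)
lemma gk001234_k011234 : Setoid.ker (![0,0,1,2,3,4] : Fin 6 → Fin 6) ⊔ Setoid.ker (![0,1,1,2,3,4] : Fin 6 → Fin 6) = Setoid.ker (![0,0,0,1,2,3] : Fin 6 → Fin 6) :=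
  ker_sup_ker _ _ _ 2 (by decide) (by decide) (by decide)
lemma gk012333_k000123 : Setoid.ker (![0,1,2,3,3,3] : Fin 6 → Fin 6) ⊔ Setoid.ker (![0,0,0,1,2,3] : Fin 6 → Fin 6) = Setoid.ker (![0,0,0,1,1,1] : Fin 6 → Fin 6) :=
  ker_sup_ker _ _ _ 1 (by decide) (by decide) (by decide)
lemma gk001234_k012134 : Setoid.ker (![0,0,1,2,3,4] : Fin 6 → Fin 6) ⊔ Setoid.ker (![0,1,2,1,3,4] : Fin 6 → Fin 6) = Setoid.ker (![0,0,1,0,2,3] : Fin 6 → Fin 6) :=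
  ker_sup_ker _ _ _ 2 (by decide) (by decide) (by decide)
lemma gk001023_k012324 : Setoid.ker (![0,0,1,0,2,3] : Fin 6 → Fin 6) ⊔ Setoid.ker (![0,1,2,3,2,4] : Fin 6 → Fin 6) = Setoid.ker (![0,0,1,0,1,2] : Fin 6 → Fin 6) :=
  ker_sup_ker _ _ _ 1 (by decide) (by decide) (by decide)
lemma gk010234_k012342 : Setoid.ker (![0,1,0,2,3,4] : Fin 6 → Fin 6) ⊔ Setoid.ker (![0,1,2,3,4,2] : Fin 6 → Fin 6) = Setoid.ker (![0,1,0,2,3,0] : Fin 6 → Fin 6) :=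
  ker_sup_ker _ _ _ 2 (by decide) (by decide) (by decide)
lemma gk010230_k012314 : Setoid.ker (![0,1,0,2,3,0] : Fin 6 → Fin 6) ⊔ Setoid.ker (![0,1,2,3,1,4] : Fin 6 → Fin 6) = Setoid.ker (![0,1,0,2,1,0] : Fin 6 → Fin 6) :=
  ker_sup_ker _ _ _ 1 (by decide) (by decide) (by decide)

end Equ6

open Equ6 in
/-- In `Equ(6) = Setoid (Fin 6)` (the elements `1,…,6` of the paper correspond to
`0,…,5 : Fin 6`): let `α` be the equivalence whose only nonsingleton block is `{4,5,6}`,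
`ε` the one with only nonsingleton block `{1,2,3}`, `β = α ⊔ ε`,
`γ = (equivalence with only nonsingleton block {1,2,4}) ⊔ equ(3,5)`, and
`δ = (equivalence with only nonsingleton block {1,3,6}) ⊔ equ(2,5)`.
Then `α < β` and `{α, β, γ, δ}` generates the lattice `Equ(6)`. -/
theorem equ6_explicit_generating_set (α ε β γ δ : Setoid (Fin 6))
    (hα : α = equ 3 4 ⊔ equ 4 5)
    (hε : ε = equ 0 1 ⊔ equ 1 2)
    (hβ : β = α ⊔ ε)
    (hγ : γ = (equ 0 1 ⊔ equ 1 3) ⊔ equ 2 4)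
    (hδ : δ = (equ 0 2 ⊔ equ 2 5) ⊔ equ 1 4) :
    α < β ∧ latticeClosure {α, β, γ, δ} = Set.univ := by
  set S : Set (Setoid (Fin 6)) := {α, β, γ, δ} with hS
  have hsup : SupClosed (latticeClosure S) := (isSublattice_latticeClosure).1
  have hinf : InfClosed (latticeClosure S) := (isSublattice_latticeClosure).2
  have hkα : α = Setoid.ker (![0,1,2,3,3,3] : Fin 6 → Fin 6) := by rw [hα, le34, le45]; exact gk012334_k012344
  have hkε : ε = Setoid.ker (![0,0,0,1,2,3] : Fin 6 → Fin 6) := by rw [hε, le01, le12]; exact gk001234_k011234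
  have hkβ : β = Setoid.ker (![0,0,0,1,1,1] : Fin 6 → Fin 6) := by rw [hβ, hkα, hkε]; exact gk012333_k000123
  have hkγ : γ = Setoid.ker (![0,0,1,0,1,2] : Fin 6 → Fin 6) := by rw [hγ, le01, le13, le24, gk001234_k012134]; exact gk001023_k012324
  have hkδ : δ = Setoid.ker (![0,1,0,2,1,0] : Fin 6 → Fin 6) := by rw [hδ, le02, le25, le14, gk010234_k012342]; exact gk010230_k012314
  have mk012333 : Setoid.ker (![0,1,2,3,3,3] : Fin 6 → Fin 6) ∈ latticeClosure S := hkα ▸ subset_latticeClosure (Set.mem_insert _ _)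
  have mk000111 : Setoid.ker (![0,0,0,1,1,1] : Fin 6 → Fin 6) ∈ latticeClosure S := hkβ ▸ subset_latticeClosure (Set.mem_insert_of_mem _ (Set.mem_insert _ _))
  have mk001012 : Setoid.ker (![0,0,1,0,1,2] : Fin 6 → Fin 6) ∈ latticeClosure S := hkγ ▸ subset_latticeClosure (Set.mem_insert_of_mem _ (Set.mem_insert_of_mem _ (Set.mem_insert _ _)))
  have mk010210 : Setoid.ker (![0,1,0,2,1,0] : Fin 6 → Fin 6) ∈ latticeClosure S := hkδ ▸ subset_latticeClosure (Set.mem_insert_of_mem _ (Set.mem_insert_of_mem _ (Set.mem_insert_of_mem _ rfl)))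
  have mk010234 : Setoid.ker (![0,1,0,2,3,4] : Fin 6 → Fin 6) ∈ latticeClosure S := lk010234 ▸ hinf mk000111 mk010210
  have mk000001 : Setoid.ker (![0,0,0,0,0,1] : Fin 6 → Fin 6) ∈ latticeClosure S := lk000001 ▸ hsup mk010234 mk001012
  have mk001234 : Setoid.ker (![0,0,1,2,3,4] : Fin 6 → Fin 6) ∈ latticeClosure S := lk001234 ▸ hinf mk001012 mk000111
  have mk000100 : Setoid.ker (![0,0,0,1,0,0] : Fin 6 → Fin 6) ∈ latticeClosure S := lk000100 ▸ hsup mk010210 mk001234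
  have mk012344 : Setoid.ker (![0,1,2,3,4,4] : Fin 6 → Fin 6) ∈ latticeClosure S := lk012344 ▸ hinf mk000100 mk012333
  have mk001011 : Setoid.ker (![0,0,1,0,1,1] : Fin 6 → Fin 6) ∈ latticeClosure S := lk001011 ▸ hsup mk012344 mk001012
  have mk010222 : Setoid.ker (![0,1,0,2,2,2] : Fin 6 → Fin 6) ∈ latticeClosure S := lk010222 ▸ hsup mk010234 mk012333
  have mk010223 : Setoid.ker (![0,1,0,2,2,3] : Fin 6 → Fin 6) ∈ latticeClosure S := lk010223 ▸ hinf mk000001 mk010222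
  have mk010110 : Setoid.ker (![0,1,0,1,1,0] : Fin 6 → Fin 6) ∈ latticeClosure S := lk010110 ▸ hsup mk010223 mk010210
  have mk012132 : Setoid.ker (![0,1,2,1,3,2] : Fin 6 → Fin 6) ∈ latticeClosure S := lk012132 ▸ hinf mk001011 mk010110
  have mk000123 : Setoid.ker (![0,0,0,1,2,3] : Fin 6 → Fin 6) ∈ latticeClosure S := lk000123 ▸ hsup mk010234 mk001234
  have mk000010 : Setoid.ker (![0,0,0,0,1,0] : Fin 6 → Fin 6) ∈ latticeClosure S := lk000010 ▸ hsup mk012132 mk000123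
  have mk010213 : Setoid.ker (![0,1,0,2,1,3] : Fin 6 → Fin 6) ∈ latticeClosure S := lk010213 ▸ hinf mk010210 mk000001
  have mk010112 : Setoid.ker (![0,1,0,1,1,2] : Fin 6 → Fin 6) ∈ latticeClosure S := lk010112 ▸ hsup mk010223 mk010213
  have mk012134 : Setoid.ker (![0,1,2,1,3,4] : Fin 6 → Fin 6) ∈ latticeClosure S := lk012134 ▸ hinf mk010112 mk001012
  have mk000012 : Setoid.ker (![0,0,0,0,1,2] : Fin 6 → Fin 6) ∈ latticeClosure S := lk000012 ▸ hsup mk000123 mk012134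
  have mk000102 : Setoid.ker (![0,0,0,1,0,2] : Fin 6 → Fin 6) ∈ latticeClosure S := lk000102 ▸ hinf mk000100 mk000001
  have mk001213 : Setoid.ker (![0,0,1,2,1,3] : Fin 6 → Fin 6) ∈ latticeClosure S := lk001213 ▸ hinf mk000100 mk001012
  have mk001211 : Setoid.ker (![0,0,1,2,1,1] : Fin 6 → Fin 6) ∈ latticeClosure S := lk001211 ▸ hsup mk012344 mk001213
  have mk012342 : Setoid.ker (![0,1,2,3,4,2] : Fin 6 → Fin 6) ∈ latticeClosure S := lk012342 ▸ hinf mk001211 mk010110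
  have mk000120 : Setoid.ker (![0,0,0,1,2,0] : Fin 6 → Fin 6) ∈ latticeClosure S := lk000120 ▸ hsup mk012342 mk000123
  have mk010111 : Setoid.ker (![0,1,0,1,1,1] : Fin 6 → Fin 6) ∈ latticeClosure S := lk010111 ▸ hsup mk010222 mk010213
  have mk012133 : Setoid.ker (![0,1,2,1,3,3] : Fin 6 → Fin 6) ∈ latticeClosure S := lk012133 ▸ hinf mk010111 mk001011
  have mk001222 : Setoid.ker (![0,0,1,2,2,2] : Fin 6 → Fin 6) ∈ latticeClosure S := lk001222 ▸ hsup mk001234 mk012333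
  have mk001223 : Setoid.ker (![0,0,1,2,2,3] : Fin 6 → Fin 6) ∈ latticeClosure S := lk001223 ▸ hinf mk001222 mk000001
  have mk001000 : Setoid.ker (![0,0,1,0,0,0] : Fin 6 → Fin 6) ∈ latticeClosure S := lk001000 ▸ hsup mk012133 mk001223
  have mk001002 : Setoid.ker (![0,0,1,0,0,2] : Fin 6 → Fin 6) ∈ latticeClosure S := lk001002 ▸ hsup mk001223 mk012134
  have mk001023 : Setoid.ker (![0,0,1,0,2,3] : Fin 6 → Fin 6) ∈ latticeClosure S := lk001023 ▸ hsup mk001234 mk012134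
  have mk001111 : Setoid.ker (![0,0,1,1,1,1] : Fin 6 → Fin 6) ∈ latticeClosure S := lk001111 ▸ hsup mk001222 mk001213
  have mk001112 : Setoid.ker (![0,0,1,1,1,2] : Fin 6 → Fin 6) ∈ latticeClosure S := lk001112 ▸ hsup mk001223 mk001213
  have mk012332 : Setoid.ker (![0,1,2,3,3,2] : Fin 6 → Fin 6) ∈ latticeClosure S := lk012332 ▸ hinf mk001111 mk010110
  have mk010000 : Setoid.ker (![0,1,0,0,0,0] : Fin 6 → Fin 6) ∈ latticeClosure S := lk010000 ▸ hsup mk012332 mk010222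
  have mk010233 : Setoid.ker (![0,1,0,2,3,3] : Fin 6 → Fin 6) ∈ latticeClosure S := lk010233 ▸ hinf mk000100 mk010222
  have mk010200 : Setoid.ker (![0,1,0,2,0,0] : Fin 6 → Fin 6) ∈ latticeClosure S := lk010200 ▸ hsup mk012342 mk010233
  have mk010230 : Setoid.ker (![0,1,0,2,3,0] : Fin 6 → Fin 6) ∈ latticeClosure S := lk010230 ▸ hsup mk012342 mk010234
  have mk011111 : Setoid.ker (![0,1,1,1,1,1] : Fin 6 → Fin 6) ∈ latticeClosure S := lk011111 ▸ hsup mk012133 mk012332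
  have mk011234 : Setoid.ker (![0,1,1,2,3,4] : Fin 6 → Fin 6) ∈ latticeClosure S := lk011234 ▸ hinf mk011111 mk000123
  have mk012034 : Setoid.ker (![0,1,2,0,3,4] : Fin 6 → Fin 6) ∈ latticeClosure S := lk012034 ▸ hinf mk010000 mk001023
  have mk012334 : Setoid.ker (![0,1,2,3,3,4] : Fin 6 → Fin 6) ∈ latticeClosure S := lk012334 ▸ hinf mk012333 mk000001
  have mk012111 : Setoid.ker (![0,1,2,1,1,1] : Fin 6 → Fin 6) ∈ latticeClosure S := lk012111 ▸ hsup mk012133 mk012334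
  have mk012122 : Setoid.ker (![0,1,2,1,2,2] : Fin 6 → Fin 6) ∈ latticeClosure S := lk012122 ▸ hsup mk012133 mk012342
  have mk012222 : Setoid.ker (![0,1,2,2,2,2] : Fin 6 → Fin 6) ∈ latticeClosure S := lk012222 ▸ hsup mk012344 mk012332
  have mk012234 : Setoid.ker (![0,1,2,2,3,4] : Fin 6 → Fin 6) ∈ latticeClosure S := lk012234 ▸ hinf mk000012 mk012222
  have mk012304 : Setoid.ker (![0,1,2,3,0,4] : Fin 6 → Fin 6) ∈ latticeClosure S := lk012304 ▸ hinf mk010200 mk001002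
  have mk012314 : Setoid.ker (![0,1,2,3,1,4] : Fin 6 → Fin 6) ∈ latticeClosure S := lk012314 ▸ hinf mk012111 mk000102
  have mk012324 : Setoid.ker (![0,1,2,3,2,4] : Fin 6 → Fin 6) ∈ latticeClosure S := lk012324 ▸ hinf mk012122 mk001112
  have mk012340 : Setoid.ker (![0,1,2,3,4,0] : Fin 6 → Fin 6) ∈ latticeClosure S := lk012340 ▸ hinf mk001000 mk010230
  have mk012341 : Setoid.ker (![0,1,2,3,4,1] : Fin 6 → Fin 6) ∈ latticeClosure S := lk012341 ▸ hinf mk012111 mk000120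
  have mk012343 : Setoid.ker (![0,1,2,3,4,3] : Fin 6 → Fin 6) ∈ latticeClosure S := lk012343 ▸ hinf mk000010 mk012333
  have mk012345 : Setoid.ker (![0,1,2,3,4,5] : Fin 6 → Fin 6) ∈ latticeClosure S := lk012345 ▸ hinf mk001234 mk012234
  have a01 : equ (0:Fin 6) 1 ∈ latticeClosure S := le01.symm ▸ mk001234
  have a02 : equ (0:Fin 6) 2 ∈ latticeClosure S := le02.symm ▸ mk010234
  have a03 : equ (0:Fin 6) 3 ∈ latticeClosure S := le03.symm ▸ mk012034
  have a04 : equ (0:Fin 6) 4 ∈ latticeClosure S := le04.symm ▸ mk012304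
  have a05 : equ (0:Fin 6) 5 ∈ latticeClosure S := le05.symm ▸ mk012340
  have a12 : equ (1:Fin 6) 2 ∈ latticeClosure S := le12.symm ▸ mk011234
  have a13 : equ (1:Fin 6) 3 ∈ latticeClosure S := le13.symm ▸ mk012134
  have a14 : equ (1:Fin 6) 4 ∈ latticeClosure S := le14.symm ▸ mk012314
  have a15 : equ (1:Fin 6) 5 ∈ latticeClosure S := le15.symm ▸ mk012341
  have a23 : equ (2:Fin 6) 3 ∈ latticeClosure S := le23.symm ▸ mk012234
  have a24 : equ (2:Fin 6) 4 ∈ latticeClosure S := le24.symm ▸ mk012324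
  have a25 : equ (2:Fin 6) 5 ∈ latticeClosure S := le25.symm ▸ mk012342
  have a34 : equ (3:Fin 6) 4 ∈ latticeClosure S := le34.symm ▸ mk012334
  have a35 : equ (3:Fin 6) 5 ∈ latticeClosure S := le35.symm ▸ mk012343
  have a45 : equ (4:Fin 6) 5 ∈ latticeClosure S := le45.symm ▸ mk012344
  have abot : ∀ u : Fin 6, equ u u ∈ latticeClosure S := fun u => by
    have hinj : ∀ a b : Fin 6, (![0,1,2,3,4,5] : Fin 6 → Fin 6) a = ![0,1,2,3,4,5] b → a = b := by decide
    exact (equ_eq_ker u u (![0,1,2,3,4,5] : Fin 6 → Fin 6) rfl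
      (fun a b h => Or.inl (hinj a b h))).symm ▸ mk012345
  have hcomm : ∀ u v : Fin 6, equ u v = equ v u := fun u v => by
    unfold equ; congr 1; ext s; exact ⟨fun h => s.symm h, fun h => s.symm h⟩
  have a10 : equ (1:Fin 6) 0 ∈ latticeClosure S := hcomm 1 0 ▸ a01
  have a20 : equ (2:Fin 6) 0 ∈ latticeClosure S := hcomm 2 0 ▸ a02
  have a30 : equ (3:Fin 6) 0 ∈ latticeClosure S := hcomm 3 0 ▸ a03
  have a40 : equ (4:Fin 6) 0 ∈ latticeClosure S := hcomm 4 0 ▸ a04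
  have a50 : equ (5:Fin 6) 0 ∈ latticeClosure S := hcomm 5 0 ▸ a05
  have a21 : equ (2:Fin 6) 1 ∈ latticeClosure S := hcomm 2 1 ▸ a12
  have a31 : equ (3:Fin 6) 1 ∈ latticeClosure S := hcomm 3 1 ▸ a13
  have a41 : equ (4:Fin 6) 1 ∈ latticeClosure S := hcomm 4 1 ▸ a14
  have a51 : equ (5:Fin 6) 1 ∈ latticeClosure S := hcomm 5 1 ▸ a15
  have a32 : equ (3:Fin 6) 2 ∈ latticeClosure S := hcomm 3 2 ▸ a23
  have a42 : equ (4:Fin 6) 2 ∈ latticeClosure S := hcomm 4 2 ▸ a24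
  have a52 : equ (5:Fin 6) 2 ∈ latticeClosure S := hcomm 5 2 ▸ a25
  have a43 : equ (4:Fin 6) 3 ∈ latticeClosure S := hcomm 4 3 ▸ a34
  have a53 : equ (5:Fin 6) 3 ∈ latticeClosure S := hcomm 5 3 ▸ a35
  have a54 : equ (5:Fin 6) 4 ∈ latticeClosure S := hcomm 5 4 ▸ a45
  have hall : ∀ t : Setoid (Fin 6), t ∈ latticeClosure S := by
    refine mem_of_all_equ hsup (fun u v => ?_)
    fin_cases u <;> fin_cases v <;> first | exact abot _ | assumption
  refine ⟨lt_of_le_of_ne (hβ ▸ le_sup_left) ?_, Set.eq_univ_iff_forall.2 hall⟩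
  rw [hkα, hkβ]
  intro h
  have h01 : Setoid.ker (![0,0,0,1,1,1] : Fin 6 → Fin 6) (0:Fin 6) 1 := Setoid.ker_def.2 (by decide)
  rw [← h] at h01
  exact absurd (Setoid.ker_def.1 h01) (by decide)
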